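/- Let g₁,…,gₘ ∈ ℝ[X₁,…,Xₙ] and K := {x ∈ ℝⁿ : gⱼ(x) ≥ 0, j = 1,…,m}. Assume the Archimedean assumption and Slater's condition hold, that for every j, ∇gⱼ(y) ≠ 0 whenever y ∈ K and gⱼ(y) = 0, and that the certificate of convexity holds with degree bounds 2d₁,…,2dₘ; set d := maxⱼ dⱼ. Then K is convex and K = {x ∈ ℝⁿ : there exists a linear functional L on the polynomials of degree at most 2d with L(1) = 1, L(Xᵢ) = xᵢ for i = 1,…,n, L(σ) ≥ 0 for every SOS polynomial σ of degree at most 2d, and L(σ·gⱼ) ≥ 0 for every j = 1,…,m and every SOS polynomial σ with deg(σ·gⱼ) ≤ 2d}. -/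

import Mathlib

open MvPolynomial

/-- A polynomial is SOS if it is a finite sum of squares of polynomials. -/
def IsSOS {τ : Type*} (p : MvPolynomial τ ℝ) : Prop :=
  ∃ (k : ℕ) (q : Fin k → MvPolynomial τ ℝ), p = ∑ i, q i ^ 2

/-- A polynomial is SOS of degree at most `2d` if it is a finite sum of squares of
polynomials, each of degree at most `d`. -/
def IsSOSUpTo {τ : Type*} (d : ℕ) (p : MvPolynomial τ ℝ) : Prop :=
  ∃ (k : ℕ) (q : Fin k → MvPolynomial τ ℝ),
    (∀ i, (q i).totalDegree ≤ d) ∧ p = ∑ i, q i ^ 2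

/-- `g_k(X)`: the polynomial `g k` in the first group of variables of `ℝ[X,Y]`. -/
noncomputable def gXp {n m : ℕ} (g : Fin m → MvPolynomial (Fin n) ℝ) (k : Fin m) :
    MvPolynomial (Fin n ⊕ Fin n) ℝ := rename Sum.inl (g k)

/-- `g_k(Y)`: the polynomial `g k` in the second group of variables of `ℝ[X,Y]`. -/
noncomputable def gYp {n m : ℕ} (g : Fin m → MvPolynomial (Fin n) ℝ) (k : Fin m) :
    MvPolynomial (Fin n ⊕ Fin n) ℝ := rename Sum.inr (g k)

/-- The polynomial `⟨∇gⱼ(Y), X − Y⟩ = Σᵢ (∂gⱼ/∂Xᵢ)(Y)·(Xᵢ − Yᵢ) ∈ ℝ[X,Y]`. -/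
noncomputable def gradIP {n m : ℕ} (g : Fin m → MvPolynomial (Fin n) ℝ) (j : Fin m) :
    MvPolynomial (Fin n ⊕ Fin n) ℝ :=
  ∑ i, rename Sum.inr (pderiv i (g j)) * (X (Sum.inl i) - X (Sum.inr i))

/-- The certificate of convexity with degree bounds `2dⱼ`:
`⟨∇gⱼ(Y), X−Y⟩ = Σ_{k=0}^m σ_{jk}·g_k(X) + Σ_{k≠j} ψ_{jk}·g_k(Y) + ψⱼ·gⱼ(Y)` (`g₀ ≡ 1`)
with `σ_{jk}` and `ψ_{jk}` (`k ≠ j`) SOS, all products of degree at most `2dⱼ`. -/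
def CertificateOfConvexity {n m : ℕ} (g : Fin m → MvPolynomial (Fin n) ℝ)
    (dj : Fin m → ℕ) : Prop :=
  ∀ j : Fin m,
    ∃ (σ0 ψ0 : MvPolynomial (Fin n ⊕ Fin n) ℝ)
      (σ ψ : Fin m → MvPolynomial (Fin n ⊕ Fin n) ℝ)
      (ψj : MvPolynomial (Fin n ⊕ Fin n) ℝ),
      IsSOS σ0 ∧ IsSOS ψ0 ∧ (∀ k, IsSOS (σ k)) ∧ (∀ k, k ≠ j → IsSOS (ψ k)) ∧
      gradIP g j =
        σ0 + (∑ k, σ k * gXp g k) + ψ0 + (∑ k ∈ Finset.univ.erase j, ψ k * gYp g k)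
          + ψj * gYp g j ∧
      σ0.totalDegree ≤ 2 * dj j ∧ ψ0.totalDegree ≤ 2 * dj j ∧
      (∀ k, (σ k * gXp g k).totalDegree ≤ 2 * dj j) ∧
      (∀ k, k ≠ j → (ψ k * gYp g k).totalDegree ≤ 2 * dj j) ∧
      (ψj * gYp g j).totalDegree ≤ 2 * dj j

lemma sos_eval_nonneg {τ : Type*} {p : MvPolynomial τ ℝ} (h : IsSOS p) (y : τ → ℝ) :
    0 ≤ eval y p := by
  obtain ⟨k, q, rfl⟩ := h
  rw [map_sum]
  exact Finset.sum_nonneg fun i _ => by rw [map_pow]; positivity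

lemma IsSOS.algHom {τ υ : Type*} {p : MvPolynomial τ ℝ}
    (φ : MvPolynomial τ ℝ →ₐ[ℝ] MvPolynomial υ ℝ) (h : IsSOS p) : IsSOS (φ p) := by
  obtain ⟨k, q, rfl⟩ := h
  exact ⟨k, fun i => φ (q i), by rw [map_sum]; simp [map_pow]⟩

lemma IsSOS.mul_C {τ : Type*} {p : MvPolynomial τ ℝ} {c : ℝ} (h : IsSOS p) (hc : 0 ≤ c) :
    IsSOS (p * C c) := by
  obtain ⟨k, q, rfl⟩ := h
  refine ⟨k, fun i => q i * C (Real.sqrt c), ?_⟩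
  rw [Finset.sum_mul]
  refine Finset.sum_congr rfl fun i _ => ?_
  rw [mul_pow, ← C_pow, Real.sq_sqrt hc]

lemma sum_sq_eq_zero {n k : ℕ} {r : Fin k → MvPolynomial (Fin n) ℝ}
    (h : ∑ i, r i ^ 2 = 0) : ∀ i, r i = 0 := by
  intro i
  apply MvPolynomial.funext
  intro x
  have hx : ∑ j, (eval x (r j)) ^ 2 = 0 := by
    have := congrArg (eval x) h
    simpa [map_sum] using this
  have h0 : ∀ j ∈ Finset.univ, (0:ℝ) ≤ (eval x (r j)) ^ 2 := fun j _ => sq_nonneg _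
  have := (Finset.sum_eq_zero_iff_of_nonneg h0).1 hx i (Finset.mem_univ i)
  have := pow_eq_zero_iff (n := 2) (by norm_num) |>.1 this
  simp [this]

lemma hc_top_ne_zero {n : ℕ} {p : MvPolynomial (Fin n) ℝ} (h : p ≠ 0) :
    homogeneousComponent p.totalDegree p ≠ 0 := by
  obtain ⟨v, hv, hdeg⟩ := Finset.exists_mem_eq_sup p.support (support_nonempty.2 h)
    (fun m => m.sum fun _ e => e)
  intro h0
  have hcoeff : coeff v (homogeneousComponent p.totalDegree p) = coeff v p := by
    rw [coeff_homogeneousComponent, if_pos]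
    rw [totalDegree, hdeg, Finsupp.degree, Finsupp.sum]
    rfl
  rw [h0] at hcoeff
  exact (mem_support_iff.1 hv) (by simpa using hcoeff.symm)

lemma hc_eq_self {n m : ℕ} {p : MvPolynomial (Fin n) ℝ} (h : p.IsHomogeneous m) :
    homogeneousComponent m p = p := by
  rw [homogeneousComponent_of_mem ((mem_homogeneousSubmodule _ _).2 h), if_pos rfl]

lemma hc_sq {n : ℕ} {q : MvPolynomial (Fin n) ℝ} {D : ℕ} (h : q.totalDegree ≤ D) :
    homogeneousComponent (2 * D) (q ^ 2) = (homogeneousComponent D q) ^ 2 := by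
  set r := homogeneousComponent D q with hr_def
  have hr : r.IsHomogeneous D := homogeneousComponent_isHomogeneous D q
  set s := q - r with hs_def
  have hcs : homogeneousComponent D s = 0 := by
    rw [hs_def, map_sub, hc_eq_self hr, sub_self]
  have hsdeg : s = 0 ∨ s.totalDegree < D := by
    rcases eq_or_ne s 0 with h0 | h0
    · exact Or.inl h0
    · right
      have hle : s.totalDegree ≤ D :=
        (totalDegree_sub q r).trans (max_le h hr.totalDegree_le)
      rcases lt_or_eq_of_le hle with hlt | heq
      · exact hlt
      · exact absurd (heq ▸ hcs) (hc_top_ne_zero h0)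
  have hq2 : q ^ 2 = r ^ 2 + (s ^ 2 + 2 * r * s) := by
    rw [hs_def]; ring
  have hE : homogeneousComponent (2 * D) (s ^ 2 + 2 * r * s) = 0 := by
    rcases hsdeg with h0 | hlt
    · simp [h0]
    · apply homogeneousComponent_eq_zero
      have hs2 : (s ^ 2).totalDegree < 2 * D := by
        calc (s ^ 2).totalDegree ≤ 2 * s.totalDegree := totalDegree_pow s 2
        _ < 2 * D := by omega
      have hrs : (2 * r * s).totalDegree < 2 * D := by
        have h1 : (2 * r * s).totalDegree ≤ (2 * r).totalDegree + s.totalDegree :=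
          totalDegree_mul _ _
        have h2 : ((2 : MvPolynomial (Fin n) ℝ) * r).totalDegree ≤ r.totalDegree := by
          have : ((2 : MvPolynomial (Fin n) ℝ) * r).totalDegree
              ≤ (2 : MvPolynomial (Fin n) ℝ).totalDegree + r.totalDegree :=
            totalDegree_mul _ _
          have h20 : (2 : MvPolynomial (Fin n) ℝ).totalDegree = 0 := by
            rw [show ((2:MvPolynomial (Fin n) ℝ)) = C 2 from (map_ofNat C 2).symm, totalDegree_C]
          omega
        have h3 : r.totalDegree ≤ D := hr.totalDegree_le
        omega
      calc (s ^ 2 + 2 * r * s).totalDegree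
          ≤ max (s ^ 2).totalDegree (2 * r * s).totalDegree := totalDegree_add _ _
        _ < 2 * D := by omega
  rw [hq2, map_add, hE, add_zero]
  exact hc_eq_self (by rw [sq, two_mul]; exact hr.mul hr)

lemma sos_degree_bound {n k d : ℕ} (q : Fin k → MvPolynomial (Fin n) ℝ)
    (hdeg : (∑ i, q i ^ 2).totalDegree ≤ 2 * d) : ∀ i, (q i).totalDegree ≤ d := by
  by_contra hcon
  push_neg at hcon
  obtain ⟨i₀, hi₀⟩ := hcon
  set D := Finset.univ.sup (fun i => (q i).totalDegree) with hD_def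
  have hiD : ∀ i, (q i).totalDegree ≤ D := fun i =>
    Finset.le_sup (f := fun i => (q i).totalDegree) (Finset.mem_univ i)
  have hdD : d < D := lt_of_lt_of_le hi₀
    (Finset.le_sup (f := fun i => (q i).totalDegree) (Finset.mem_univ i₀))
  have h2 : homogeneousComponent (2 * D) (∑ i, q i ^ 2)
      = ∑ i, (homogeneousComponent D (q i)) ^ 2 := by
    rw [map_sum]
    exact Finset.sum_congr rfl fun i _ => hc_sq (hiD i)
  have h0 : homogeneousComponent (2 * D) (∑ i, q i ^ 2) = 0 :=
    by apply homogeneousComponent_eq_zero; omega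
  have hall : ∀ i, homogeneousComponent D (q i) = 0 :=
    sum_sq_eq_zero (by rw [← h2, h0])
  obtain ⟨i₁, _, hi₁⟩ := Finset.exists_mem_eq_sup Finset.univ
    (⟨i₀, Finset.mem_univ i₀⟩ : (Finset.univ : Finset (Fin k)).Nonempty)
    (fun i => (q i).totalDegree)
  have hDi₁ : (q i₁).totalDegree = D := by rw [hD_def, hi₁]
  have hne : q i₁ ≠ 0 := by
    intro h0'
    rw [h0', totalDegree_zero] at hDi₁
    omega
  exact hc_top_ne_zero hne (by rw [hDi₁]; exact hall i₁)

lemma isSOSUpTo_of_isSOS {n d : ℕ} {p : MvPolynomial (Fin n) ℝ} (h : IsSOS p)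
    (hdeg : p.totalDegree ≤ 2 * d) : IsSOSUpTo d p := by
  obtain ⟨k, q, rfl⟩ := h
  exact ⟨k, q, sos_degree_bound q hdeg, rfl⟩

lemma totalDegree_aeval_le {τ υ : Type*} (f : τ → MvPolynomial υ ℝ)
    (hf : ∀ s, (f s).totalDegree ≤ 1) (p : MvPolynomial τ ℝ) :
    (aeval f p).totalDegree ≤ p.totalDegree := by
  conv_lhs => rw [p.as_sum, map_sum]
  apply totalDegree_finsetSum_le
  intro v hv
  rw [aeval_monomial]
  calc ((algebraMap ℝ (MvPolynomial υ ℝ)) (coeff v p) * v.prod fun s n => f s ^ n).totalDegree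
      ≤ ((algebraMap ℝ (MvPolynomial υ ℝ)) (coeff v p)).totalDegree
        + (v.prod fun s n => f s ^ n).totalDegree := totalDegree_mul _ _
    _ ≤ 0 + (v.sum fun _ e => e) := by
        refine add_le_add ?_ ?_
        · rw [algebraMap_eq, totalDegree_C]
        · rw [Finsupp.prod]
          calc (∏ s ∈ v.support, f s ^ v s).totalDegree
              ≤ ∑ s ∈ v.support, (f s ^ v s).totalDegree := totalDegree_finset_prod _ _
            _ ≤ ∑ s ∈ v.support, v s := by
                refine Finset.sum_le_sum fun s _ => ?_
                calc (f s ^ v s).totalDegree ≤ v s * (f s).totalDegree :=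
                      totalDegree_pow _ _
                  _ ≤ v s * 1 := Nat.mul_le_mul_left _ (hf s)
                  _ = v s := Nat.mul_one _
            _ = v.sum fun _ e => e := rfl
    _ ≤ p.totalDegree := by rw [zero_add]; exact le_totalDegree hv

lemma continuous_eval_poly {n : ℕ} (p : MvPolynomial (Fin n) ℝ) :
    Continuous fun x : Fin n → ℝ => eval x p := by
  induction p using MvPolynomial.induction_on with
  | C a => simpa using continuous_const
  | add p q hp hq => simp only [map_add]; exact hp.add hq
  | mul_X p i hp => simp only [map_mul, eval_X]; exact hp.mul (continuous_apply i)

/-- under the Archimedean assumption, Slater's condition, the boundary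
nondegeneracy, and the certificate of convexity with degree bounds `2d₁,…,2dₘ`
(`d := maxⱼ dⱼ`), the set `K` is convex and admits the explicit semidefinite
representation by moment and localizing conditions of order `d`. -/
theorem stmt_16 (n m : ℕ) (g : Fin m → MvPolynomial (Fin n) ℝ)
    (K : Set (Fin n → ℝ)) (hK : K = {x | ∀ j, 0 ≤ eval x (g j)})
    (hcompact : IsCompact K)
    (harch : ∃ (M : ℝ) (σ₀ : MvPolynomial (Fin n) ℝ) (σ : Fin m → MvPolynomial (Fin n) ℝ),
      IsSOS σ₀ ∧ (∀ j, IsSOS (σ j)) ∧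
      C M - ∑ i, X i ^ 2 = σ₀ + ∑ j, σ j * g j)
    (slater : ∃ x₀ : Fin n → ℝ, ∀ j, 0 < eval x₀ (g j))
    (hnd : ∀ j : Fin m, ∀ y ∈ K, eval y (g j) = 0 →
      (fun i => eval y (pderiv i (g j))) ≠ (0 : Fin n → ℝ))
    (dj : Fin m → ℕ) (hcert : CertificateOfConvexity g dj)
    (d : ℕ) (hd : d = Finset.univ.sup dj) :
    Convex ℝ K ∧
    K = {x | ∃ L : MvPolynomial (Fin n) ℝ →ₗ[ℝ] ℝ,
      L 1 = 1 ∧ (∀ i, L (X i) = x i) ∧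
      (∀ σ, IsSOSUpTo d σ → 0 ≤ L σ) ∧
      (∀ j : Fin m, ∀ σ : MvPolynomial (Fin n) ℝ, IsSOS σ →
        (σ * g j).totalDegree ≤ 2 * d → 0 ≤ L (σ * g j))} := by
  obtain ⟨x₀, hx₀⟩ := slater
  have hKmem : ∀ y : Fin n → ℝ, y ∈ K ↔ ∀ j, 0 ≤ eval y (g j) := by
    intro y; rw [hK]; exact Iff.rfl
  have hx₀K : x₀ ∈ K := (hKmem x₀).2 fun j => (hx₀ j).le
  set U : Set (Fin n → ℝ) := ⋂ k, {y | 0 < eval y (g k)} with hU_def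
  have hUopen : IsOpen U := isOpen_iInter_of_finite fun k =>
    isOpen_lt continuous_const (continuous_eval_poly (g k))
  have hUmem : ∀ y, y ∈ U ↔ ∀ k, 0 < eval y (g k) := fun y => by
    simp [hU_def, Set.mem_iInter, Set.mem_setOf_eq]
  have hUK : U ⊆ K := fun y hy => (hKmem y).2 fun j => ((hUmem y).1 hy j).le
  have hdj : ∀ j, 2 * dj j ≤ 2 * d := fun j =>
    Nat.mul_le_mul_left 2 (hd ▸ Finset.le_sup (Finset.mem_univ j))
  have haev : ∀ (y : Fin n → ℝ) (p : MvPolynomial (Fin n) ℝ), aeval y p = eval y p := by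
    intro y p; rw [aeval_def, Algebra.algebraMap_self]; rfl
  -- hard direction
  have hback : ∀ (x : Fin n → ℝ) (L : MvPolynomial (Fin n) ℝ →ₗ[ℝ] ℝ),
      L 1 = 1 → (∀ i, L (X i) = x i) →
      (∀ σ, IsSOSUpTo d σ → 0 ≤ L σ) →
      (∀ j : Fin m, ∀ σ : MvPolynomial (Fin n) ℝ, IsSOS σ →
        (σ * g j).totalDegree ≤ 2 * d → 0 ≤ L (σ * g j)) → x ∈ K := by
    intro x L hL1 hLX hLpos hLloc
    by_contra hxK
    set γ : ℝ → (Fin n → ℝ) := fun t i => x₀ i + t * (x i - x₀ i) with hγ_def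
    have hγcont : Continuous γ := continuous_pi fun i =>
      continuous_const.add (continuous_id.mul continuous_const)
    have hγ0 : γ 0 = x₀ := funext fun i => by simp [hγ_def]
    have hγ1 : γ 1 = x := funext fun i => by simp [hγ_def]
    set T : Set ℝ := Set.Icc (0:ℝ) 1 ∩ γ ⁻¹' K with hT_def
    have hT0 : (0:ℝ) ∈ T := by
      refine ⟨⟨le_refl 0, zero_le_one⟩, ?_⟩
      show γ 0 ∈ K
      rw [hγ0]; exact hx₀K
    have hTbdd : BddAbove T := ⟨1, fun t ht => ht.1.2⟩
    have hTcpt : IsCompact T := IsCompact.of_isClosed_subset isCompact_Icc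
      (isClosed_Icc.inter (hcompact.isClosed.preimage hγcont)) Set.inter_subset_left
    set t₀ := sSup T with ht₀_def
    have ht₀T : t₀ ∈ T := hTcpt.sSup_mem ⟨0, hT0⟩
    set u : Fin n → ℝ := γ t₀ with hu_def
    have huK : u ∈ K := ht₀T.2
    have huKj : ∀ j, 0 ≤ eval u (g j) := (hKmem u).1 huK
    have ht₀0 : 0 ≤ t₀ := ht₀T.1.1
    have ht₀1 : t₀ < 1 :=
      lt_of_le_of_ne ht₀T.1.2 (fun h => hxK (by rw [← hγ1, ← h]; exact huK))
    obtain ⟨j, hgj0⟩ : ∃ j, eval u (g j) = 0 := by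
      by_contra hcon
      push_neg at hcon
      have huU : u ∈ U := (hUmem u).2 fun k => lt_of_le_of_ne (huKj k) (Ne.symm (hcon k))
      obtain ⟨δ, hδpos, hδ⟩ := Metric.isOpen_iff.1 (hUopen.preimage hγcont) t₀ huU
      have ht₁gt : t₀ < min (t₀ + δ / 2) 1 := lt_min (by linarith) ht₀1
      have ht₁mem : min (t₀ + δ / 2) 1 ∈ T := by
        refine ⟨⟨le_trans ht₀0 ht₁gt.le, min_le_right _ _⟩, hUK (hδ ?_)⟩
        rw [Metric.mem_ball, Real.dist_eq,
          abs_of_pos (by linarith : (0:ℝ) < min (t₀ + δ / 2) 1 - t₀)]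
        have h := min_le_left (t₀ + δ / 2) 1
        linarith
      exact absurd (le_csSup hTbdd ht₁mem) (not_le.2 ht₁gt)
    have ht₀pos : 0 < t₀ := by
      rcases lt_or_eq_of_le ht₀0 with h | h
      · exact h
      · exfalso
        have hux : u = x₀ := by rw [hu_def, ← h, hγ0]
        exact (hx₀ j).ne' (hux ▸ hgj0)
    set w : Fin n → ℝ := fun i => eval u (pderiv i (g j)) with hw_def
    have hw : w ≠ 0 := hnd j u huK hgj0
    obtain ⟨i₀, hwi₀⟩ := Function.ne_iff.1 hw
    have hSpos : 0 < ∑ i, w i ^ 2 :=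
      Finset.sum_pos' (fun i _ => sq_nonneg _)
        ⟨i₀, Finset.mem_univ i₀,
          lt_of_le_of_ne (sq_nonneg _) (Ne.symm (pow_ne_zero 2 hwi₀))⟩
    set ρ : ℝ → (Fin n → ℝ) := fun t i => x₀ i - t * w i with hρ_def
    have hρcont : Continuous ρ := continuous_pi fun i =>
      continuous_const.sub (continuous_id.mul continuous_const)
    have hρ0 : (0:ℝ) ∈ ρ ⁻¹' U := by
      have h0 : ρ 0 = x₀ := funext fun i => by simp [hρ_def]
      show ρ 0 ∈ U
      rw [h0]; exact (hUmem x₀).2 hx₀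
    obtain ⟨δ, hδpos, hδ⟩ := Metric.isOpen_iff.1 (hUopen.preimage hρcont) 0 hρ0
    set c := δ / 2 with hc_def
    have hcpos : 0 < c := half_pos hδpos
    set z : Fin n → ℝ := ρ c with hz_def
    have hzU : z ∈ U := hδ (by
      rw [Metric.mem_ball, Real.dist_eq, sub_zero, abs_of_pos hcpos]
      linarith)
    have hzK : ∀ k, 0 ≤ eval z (g k) := fun k => ((hUmem z).1 hzU k).le
    obtain ⟨σ0, ψ0, σp, ψp, ψjp, hσ0, hψ0, hσp, hψp, hid, hdσ0, hdψ0, hdσp, hdψp, hdψj⟩ :=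
      hcert j
    -- Property P: strict supporting inequality at x₀
    have hP : 0 < ∑ i, w i * (x₀ i - u i) := by
      set E : Fin n ⊕ Fin n → ℝ := Sum.elim z u with hE_def
      have hgrad : eval E (gradIP g j) = ∑ i, w i * (z i - u i) := by
        rw [gradIP, map_sum]
        refine Finset.sum_congr rfl fun i _ => ?_
        rw [map_mul, map_sub, eval_X, eval_X, eval_rename, hE_def, Sum.elim_comp_inr]
        simp [hw_def]
      have hRHS : 0 ≤ eval E (gradIP g j) := by
        rw [hid]
        simp only [map_add]
        have h1 : 0 ≤ eval E σ0 := sos_eval_nonneg hσ0 E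
        have h2 : 0 ≤ eval E (∑ k, σp k * gXp g k) := by
          rw [map_sum]
          refine Finset.sum_nonneg fun k _ => ?_
          rw [map_mul, gXp, eval_rename, hE_def, Sum.elim_comp_inl]
          exact mul_nonneg (sos_eval_nonneg (hσp k) E) (hzK k)
        have h3 : 0 ≤ eval E ψ0 := sos_eval_nonneg hψ0 E
        have h4 : 0 ≤ eval E (∑ k ∈ Finset.univ.erase j, ψp k * gYp g k) := by
          rw [map_sum]
          refine Finset.sum_nonneg fun k hk => ?_
          rw [map_mul, gYp, eval_rename, hE_def, Sum.elim_comp_inr]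
          exact mul_nonneg (sos_eval_nonneg (hψp k (Finset.mem_erase.1 hk).1) E) (huKj k)
        have h5 : eval E (ψjp * gYp g j) = 0 := by
          rw [map_mul, gYp, eval_rename, hE_def, Sum.elim_comp_inr, hgj0, mul_zero]
        linarith
      have hzCalc : ∑ i, w i * (z i - u i)
          = (∑ i, w i * (x₀ i - u i)) - c * ∑ i, w i ^ 2 := by
        rw [Finset.mul_sum, ← Finset.sum_sub_distrib]
        refine Finset.sum_congr rfl fun i _ => ?_
        have hzi : z i = x₀ i - c * w i := rfl
        rw [hzi]; ring
      rw [hgrad, hzCalc] at hRHS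
      nlinarith [mul_pos hcpos hSpos]
    -- The L-step
    set subU : MvPolynomial (Fin n ⊕ Fin n) ℝ →ₐ[ℝ] MvPolynomial (Fin n) ℝ :=
      aeval (Sum.elim X fun i => C (u i)) with hsubU_def
    have hsubX : ∀ p : MvPolynomial (Fin n) ℝ, subU (rename Sum.inl p) = p := by
      intro p
      rw [hsubU_def, aeval_rename, Sum.elim_comp_inl, aeval_X_left_apply]
    have hsubY : ∀ p : MvPolynomial (Fin n) ℝ, subU (rename Sum.inr p) = C (eval u p) := by
      intro p
      rw [hsubU_def, aeval_rename, Sum.elim_comp_inr]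
      induction p using MvPolynomial.induction_on with
      | C a => simp [algebraMap_eq]
      | add p q hp hq => rw [map_add, hp, hq, map_add, C_add]
      | mul_X p i hp => rw [map_mul, hp, aeval_X, eval_mul, eval_X, C_mul]
    have hsubdeg : ∀ p : MvPolynomial (Fin n ⊕ Fin n) ℝ,
        (subU p).totalDegree ≤ p.totalDegree := by
      intro p
      rw [hsubU_def]
      apply totalDegree_aeval_le
      intro s
      rcases s with i | i
      · rw [Sum.elim_inl, totalDegree_X]
      · rw [Sum.elim_inr, totalDegree_C]; exact Nat.zero_le 1
    have hLsub : ∀ p : MvPolynomial (Fin n ⊕ Fin n) ℝ, IsSOS p →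
        p.totalDegree ≤ 2 * dj j → 0 ≤ L (subU p) := by
      intro p hp hdp
      exact hLpos _ (isSOSUpTo_of_isSOS (IsSOS.algHom subU hp)
        (le_trans (hsubdeg p) (le_trans hdp (hdj j))))
    have hLmain : 0 ≤ ∑ i, w i * (x i - u i) := by
      have hLgrad : L (subU (gradIP g j)) = ∑ i, w i * (x i - u i) := by
        rw [gradIP, map_sum, map_sum]
        refine Finset.sum_congr rfl fun i _ => ?_
        rw [map_mul, map_sub, hsubY]
        have h1 : subU (X (Sum.inl i)) = X i := by
          rw [hsubU_def, aeval_X, Sum.elim_inl]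
        have h2 : subU (X (Sum.inr i)) = C (u i) := by
          rw [hsubU_def, aeval_X, Sum.elim_inr]
        rw [h1, h2, C_mul', map_smul, map_sub]
        have h3 : L (C (u i)) = u i := by
          rw [C_eq_smul_one, map_smul, hL1, smul_eq_mul, mul_one]
        rw [hLX i, h3, smul_eq_mul]
      have hidL := congrArg (fun p => L (subU p)) hid
      rw [← hLgrad, hidL]
      simp only [map_add]
      have hA1 : 0 ≤ L (subU σ0) := hLsub σ0 hσ0 hdσ0
      have hA2 : 0 ≤ L (subU (∑ k, σp k * gXp g k)) := by
        rw [map_sum, map_sum]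
        refine Finset.sum_nonneg fun k _ => ?_
        have heq : subU (σp k * gXp g k) = subU (σp k) * g k := by
          rw [map_mul, gXp, hsubX]
        rw [heq]
        refine hLloc k _ (IsSOS.algHom subU (hσp k)) ?_
        rw [← heq]
        exact le_trans (hsubdeg _) (le_trans (hdσp k) (hdj j))
      have hA3 : 0 ≤ L (subU ψ0) := hLsub ψ0 hψ0 hdψ0
      have hA4 : 0 ≤ L (subU (∑ k ∈ Finset.univ.erase j, ψp k * gYp g k)) := by
        rw [map_sum, map_sum]
        refine Finset.sum_nonneg fun k hk => ?_
        have hkj : k ≠ j := (Finset.mem_erase.1 hk).1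
        have heq : subU (ψp k * gYp g k) = subU (ψp k) * C (eval u (g k)) := by
          rw [map_mul, gYp, hsubY]
        refine hLpos _ (isSOSUpTo_of_isSOS ?_ ?_)
        · rw [heq]; exact (IsSOS.algHom subU (hψp k hkj)).mul_C (huKj k)
        · exact le_trans (hsubdeg _) (le_trans (hdψp k hkj) (hdj j))
      have hA5 : L (subU (ψjp * gYp g j)) = 0 := by
        rw [map_mul, gYp, hsubY, hgj0, C_0, mul_zero, map_zero]
      linarith
    -- contradiction
    have hui : ∀ i, u i = x₀ i + t₀ * (x i - x₀ i) := fun i => rfl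
    have hx₀u : ∑ i, w i * (x₀ i - u i) = -t₀ * ∑ i, w i * (x i - x₀ i) := by
      rw [Finset.mul_sum]
      refine Finset.sum_congr rfl fun i _ => ?_
      rw [hui i]; ring
    have hfin : ∑ i, w i * (x i - u i) = (1 - t₀) * ∑ i, w i * (x i - x₀ i) := by
      rw [Finset.mul_sum]
      refine Finset.sum_congr rfl fun i _ => ?_
      rw [hui i]; ring
    rw [hx₀u] at hP
    rw [hfin] at hLmain
    nlinarith
  -- the set equality
  have hset : K = {x | ∃ L : MvPolynomial (Fin n) ℝ →ₗ[ℝ] ℝ,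
      L 1 = 1 ∧ (∀ i, L (X i) = x i) ∧
      (∀ σ, IsSOSUpTo d σ → 0 ≤ L σ) ∧
      (∀ j : Fin m, ∀ σ : MvPolynomial (Fin n) ℝ, IsSOS σ →
        (σ * g j).totalDegree ≤ 2 * d → 0 ≤ L (σ * g j))} := by
    apply Set.Subset.antisymm
    · intro x hx
      refine ⟨(aeval x : MvPolynomial (Fin n) ℝ →ₐ[ℝ] ℝ).toLinearMap, ?_, ?_, ?_, ?_⟩
      · simp
      · intro i; simp
      · intro σ hσ
        obtain ⟨k, q, _, rfl⟩ := hσ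
        show (0:ℝ) ≤ aeval x (∑ i, q i ^ 2)
        rw [haev]
        exact sos_eval_nonneg ⟨k, q, rfl⟩ x
      · intro j σ hσ _
        show (0:ℝ) ≤ aeval x (σ * g j)
        rw [haev, eval_mul]
        exact mul_nonneg (sos_eval_nonneg hσ x) ((hKmem x).1 hx j)
    · rintro x ⟨L, h1, h2, h3, h4⟩
      exact hback x L h1 h2 h3 h4
  refine ⟨?_, hset⟩
  rw [hset]
  intro p hp q hq a b ha hb hab
  obtain ⟨Lp, hLp1, hLpX, hLps, hLpl⟩ := hp
  obtain ⟨Lq, hLq1, hLqX, hLqs, hLql⟩ := hq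
  refine ⟨a • Lp + b • Lq, ?_, ?_, ?_, ?_⟩
  · simp [hLp1, hLq1, hab]
  · intro i
    simp [hLpX i, hLqX i]
  · intro σ hσ
    simp only [LinearMap.add_apply, LinearMap.smul_apply, smul_eq_mul]
    exact add_nonneg (mul_nonneg ha (hLps σ hσ)) (mul_nonneg hb (hLqs σ hσ))
  · intro j σ hσ hdeg
    simp only [LinearMap.add_apply, LinearMap.smul_apply, smul_eq_mul]
    exact add_nonneg (mul_nonneg ha (hLpl j σ hσ hdeg)) (mul_nonneg hb (hLql j σ hσ hdeg))
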